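/- (Theorem 4.1.) For any δ ∈ (0,1), any side information S : {1,…,N} → [0,1], any predictable sequence (β_t) with β_t ∈ [−1,1], any sampling strategy (q_t), and any family of predictable betting strategies (λ_t(m)) for m ∈ [0,1] such that each factor 1 + λ_t(m)(Z_t + β_t U_t − μ_t(m)) is almost surely nonnegative, the sets C_t = {m ∈ [0,1] : W̃_t(m) < 1/δ}, where W̃_t(m) = Π_{s=1}^t (1 + λ_s(m)(Z_s + β_s U_s − μ_s(m))) and U_t = S(I_t) − Σ_{i∈N_t} q_t(i) S(i), form a (1−δ)-confidence sequence for m*: P(∃ t ∈ {1,…,N} : m* ∉ C_t) ≤ δ. -/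

import Mathlib

open MeasureTheory Finset

namespace RLFA

variable {Ω : Type*}

/-- `remaining I t ω` is the set `N_t = {1,…,N} \ {I_1, …, I_{t-1}}` of indices not yet
sampled before time `t`. -/
def remaining {N : ℕ} (I : ℕ → Ω → Fin N) (t : ℕ) (ω : Ω) : Finset (Fin N) :=
  Finset.univ \ (Finset.Icc 1 (t - 1)).image fun j => I j ω

/-- The filtration `F_t = σ(I_1, …, I_t)`. -/
def filt {N : ℕ} (I : ℕ → Ω → Fin N) (t : ℕ) : MeasurableSpace Ω :=
  ⨆ j ∈ Finset.Icc 1 t, MeasurableSpace.comap (I j) ⊤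

/-- The importance-weighted observation `Z_t = f(I_t) · π(I_t) / q_t(I_t)`. -/
noncomputable def Zt {N : ℕ} (π f : Fin N → ℝ) (q : ℕ → Ω → Fin N → ℝ)
    (I : ℕ → Ω → Fin N) (t : ℕ) (ω : Ω) : ℝ :=
  f (I t ω) * (π (I t ω) / q t ω (I t ω))

/-- `μ_t(m) = m − Σ_{j=1}^{t−1} π(I_j) f(I_j)`. -/
def muT {N : ℕ} (π f : Fin N → ℝ) (I : ℕ → Ω → Fin N) (m : ℝ) (t : ℕ) (ω : Ω) : ℝ :=
  m - ∑ j ∈ Finset.Icc 1 (t - 1), π (I j ω) * f (I j ω)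

/-- The control variate `U_t = S(I_t) − Σ_{i ∈ N_t} q_t(i) S(i)`. -/
def Ut {N : ℕ} (S : Fin N → ℝ) (q : ℕ → Ω → Fin N → ℝ) (I : ℕ → Ω → Fin N)
    (t : ℕ) (ω : Ω) : ℝ :=
  S (I t ω) - ∑ i ∈ remaining I t ω, q t ω i * S i

/-- The control-variate wealth process
`W̃_t(m) = Π_{s=1}^t (1 + λ_s(m)(Z_s + β_s U_s − μ_s(m)))`. -/
noncomputable def wealthCV {N : ℕ} (π f S : Fin N → ℝ) (q : ℕ → Ω → Fin N → ℝ)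
    (I : ℕ → Ω → Fin N) (lam β : ℕ → Ω → ℝ) (m : ℝ) (t : ℕ) (ω : Ω) : ℝ :=
  ∏ s ∈ Finset.Icc 1 t,
    (1 + lam s ω * (Zt π f q I s ω + β s ω * Ut S q I s ω - muT π f I m s ω))

section Aux

open scoped Classical

variable {N : ℕ}

lemma le_filt (I : ℕ → Ω → Fin N) {s t : ℕ} (h1 : 1 ≤ s) (h2 : s ≤ t) :
    MeasurableSpace.comap (I s) ⊤ ≤ filt I t :=
  le_iSup₂ (f := fun j (_ : j ∈ Finset.Icc 1 t) => MeasurableSpace.comap (I j) ⊤) s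
    (Finset.mem_Icc.mpr ⟨h1, h2⟩)

lemma filt_mono (I : ℕ → Ω → Fin N) {s t : ℕ} (h : s ≤ t) : filt I s ≤ filt I t := by
  refine iSup₂_le fun j hj => ?_
  obtain ⟨h1, h2⟩ := Finset.mem_Icc.mp hj
  exact le_filt I h1 (h2.trans h)

lemma filt_le [m0 : MeasurableSpace Ω] (I : ℕ → Ω → Fin N) (hI : ∀ t, Measurable (I t))
    (t : ℕ) : filt I t ≤ m0 := by
  refine iSup₂_le fun j _ => ?_
  have h : MeasurableSpace.comap (I j) ⊤ = MeasurableSpace.comap (I j) inferInstance := rfl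
  rw [h]
  exact (hI j).comap_le

lemma measurable_I (I : ℕ → Ω → Fin N) {s t : ℕ} (h1 : 1 ≤ s) (h2 : s ≤ t) :
    Measurable[filt I t] (I s) :=
  measurable_iff_comap_le.mpr ((MeasurableSpace.comap_mono le_top).trans (le_filt I h1 h2))

lemma measurable_comp_I {m' : MeasurableSpace Ω} {G : Ω → Fin N → ℝ}
    (hG : ∀ i, Measurable[m'] fun ω => G ω i) {J : Ω → Fin N}
    (hJ : Measurable[m'] J) : Measurable[m'] fun ω => G ω (J ω) := by
  have h : (fun ω => G ω (J ω)) = fun ω => ∑ i : Fin N, if J ω = i then G ω i else 0 := by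
    funext ω
    rw [Finset.sum_ite_eq]
    simp
  rw [h]
  refine Finset.measurable_sum _ fun i _ => Measurable.ite ?_ (hG i) measurable_const
  exact hJ (measurableSet_singleton i)

lemma mem_remaining_iff (I : ℕ → Ω → Fin N) {t : ℕ} {ω : Ω} {i : Fin N} :
    i ∈ remaining I t ω ↔ ∀ j ∈ Finset.Icc 1 (t - 1), I j ω ≠ i := by
  simp [remaining]

lemma measurableSet_mem_remaining (I : ℕ → Ω → Fin N) (t : ℕ) (i : Fin N) :
    MeasurableSet[filt I (t - 1)] {ω | i ∈ remaining I t ω} := by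
  have h : {ω | i ∈ remaining I t ω}
      = ⋂ j ∈ (Finset.Icc 1 (t - 1) : Finset ℕ), ((I j) ⁻¹' {i})ᶜ := by
    ext ω
    simp [mem_remaining_iff]
  rw [h]
  refine MeasurableSet.biInter (Finset.countable_toSet _) fun j hj => ?_
  obtain ⟨h1, h2⟩ := Finset.mem_Icc.mp hj
  exact ((measurable_I I h1 h2) (measurableSet_singleton i)).compl

lemma measurable_sum_remaining (I : ℕ → Ω → Fin N) (t : ℕ) {g : Ω → Fin N → ℝ}
    (hg : ∀ i, Measurable[filt I (t - 1)] fun ω => g ω i) :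
    Measurable[filt I (t - 1)] fun ω => ∑ i ∈ remaining I t ω, g ω i := by
  have h : (fun ω => ∑ i ∈ remaining I t ω, g ω i)
      = fun ω => ∑ i : Fin N, if i ∈ remaining I t ω then g ω i else 0 := by
    funext ω
    rw [Finset.sum_ite_mem, Finset.univ_inter]
  rw [h]
  exact Finset.measurable_sum _ fun i _ =>
    Measurable.ite (measurableSet_mem_remaining I t i) (hg i) measurable_const

lemma measurable_Zt (π f : Fin N → ℝ) (q : ℕ → Ω → Fin N → ℝ) (I : ℕ → Ω → Fin N)
    {t : ℕ} (hq : ∀ i, Measurable[filt I (t - 1)] fun ω => q t ω i) (h1 : 1 ≤ t) :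
    Measurable[filt I t] (Zt π f q I t) := by
  refine measurable_comp_I (G := fun ω i => f i * (π i / q t ω i))
    (fun i => ?_) (measurable_I I h1 le_rfl)
  exact measurable_const.mul
    (measurable_const.div (((hq i)).mono (filt_mono I (Nat.sub_le t 1)) le_rfl))

lemma measurable_Ut (S : Fin N → ℝ) (q : ℕ → Ω → Fin N → ℝ) (I : ℕ → Ω → Fin N)
    {t : ℕ} (hq : ∀ i, Measurable[filt I (t - 1)] fun ω => q t ω i) (h1 : 1 ≤ t) :
    Measurable[filt I t] (Ut S q I t) := by
  refine Measurable.sub ?_ ?_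
  · exact (measurable_from_top (f := S)).comp (measurable_I I h1 le_rfl)
  · exact (measurable_sum_remaining I t fun i => (hq i).mul measurable_const).mono
      (filt_mono I (Nat.sub_le t 1)) le_rfl

lemma measurable_muT (π f : Fin N → ℝ) (I : ℕ → Ω → Fin N) (m : ℝ) (t : ℕ) :
    Measurable[filt I (t - 1)] (muT π f I m t) := by
  refine Measurable.sub measurable_const (Finset.measurable_sum _ fun j hj => ?_)
  obtain ⟨h1, h2⟩ := Finset.mem_Icc.mp hj
  exact (measurable_from_top (f := fun i => π i * f i)).comp (measurable_I I h1 h2)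

lemma measurable_wealth (π f S : Fin N → ℝ) (q : ℕ → Ω → Fin N → ℝ)
    (I : ℕ → Ω → Fin N) (β L : ℕ → Ω → ℝ)
    (hq : ∀ s, 1 ≤ s → s ≤ N → ∀ i, Measurable[filt I (s - 1)] fun ω => q s ω i)
    (hβ : ∀ s, 1 ≤ s → s ≤ N → Measurable[filt I (s - 1)] (β s))
    (hL : ∀ s, 1 ≤ s → s ≤ N → Measurable[filt I (s - 1)] (L s))
    (m : ℝ) {t : ℕ} (ht : t ≤ N) :
    Measurable[filt I t] (wealthCV π f S q I L β m t) := by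
  unfold wealthCV
  refine Finset.measurable_prod _ fun s hs => ?_
  obtain ⟨hs1, hs2⟩ := Finset.mem_Icc.mp hs
  have hsN : s ≤ N := hs2.trans ht
  have hmono : filt I s ≤ filt I t := filt_mono I hs2
  have hmono' : filt I (s - 1) ≤ filt I t := filt_mono I ((Nat.sub_le s 1).trans hs2)
  refine measurable_const.add (((hL s hs1 hsN).mono hmono' le_rfl).mul ?_)
  refine Measurable.sub (Measurable.add ?_ ?_) ?_
  · exact (measurable_Zt π f q I (hq s hs1 hsN) hs1).mono hmono le_rfl
  · exact ((hβ s hs1 hsN).mono hmono' le_rfl).mul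
      ((measurable_Ut S q I (hq s hs1 hsN) hs1).mono hmono le_rfl)
  · exact (measurable_muT π f I m s).mono hmono' le_rfl

lemma sum_remaining_pif (π f : Fin N → ℝ) (I : ℕ → Ω → Fin N)
    (hWoR : ∀ t ω, 1 ≤ t → t ≤ N → I t ω ∈ remaining I t ω)
    {t : ℕ} (ht : t ≤ N) (ω : Ω) :
    ∑ i ∈ remaining I t ω, π i * f i
      = (∑ i, π i * f i) - ∑ j ∈ Finset.Icc 1 (t - 1), π (I j ω) * f (I j ω) := by
  unfold remaining
  rw [Finset.sum_sdiff_eq_sub (Finset.subset_univ _)]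
  congr 1
  refine Finset.sum_image fun x hx y hy hxy => ?_
  obtain ⟨hx1, hx2⟩ := Finset.mem_Icc.mp hx
  obtain ⟨hy1, hy2⟩ := Finset.mem_Icc.mp hy
  by_contra hne
  rcases Ne.lt_or_gt hne with h | h
  · exact (mem_remaining_iff I).mp
      (hWoR y ω hy1 ((hy2.trans (Nat.sub_le t 1)).trans ht)) x
      (Finset.mem_Icc.mpr ⟨hx1, by omega⟩) hxy
  · exact (mem_remaining_iff I).mp
      (hWoR x ω hx1 ((hx2.trans (Nat.sub_le t 1)).trans ht)) y
      (Finset.mem_Icc.mpr ⟨hy1, by omega⟩) hxy.symm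

lemma wealthCV_succ (π f S : Fin N → ℝ) (q : ℕ → Ω → Fin N → ℝ) (I : ℕ → Ω → Fin N)
    (L β : ℕ → Ω → ℝ) (m : ℝ) (s : ℕ) (ω : Ω) :
    wealthCV π f S q I L β m (s + 1) ω = wealthCV π f S q I L β m s ω *
      (1 + L (s + 1) ω * (Zt π f q I (s + 1) ω + β (s + 1) ω * Ut S q I (s + 1) ω
        - muT π f I m (s + 1) ω)) := by
  unfold wealthCV
  exact Finset.prod_Icc_succ_top (Nat.succ_le_succ (Nat.zero_le s)) _

end Aux

/-- **Theorem 4.1.** For any `δ ∈ (0,1)`, any side information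
`S : {1,…,N} → [0,1]`, any predictable sequence `(β_t)` with `β_t ∈ [−1,1]`, any sampling
strategy `(q_t)`, and any family of predictable betting strategies `(λ_t(m))` for `m ∈ [0,1]`
such that each factor `1 + λ_t(m)(Z_t + β_t U_t − μ_t(m))` is almost surely nonnegative, the
sets `C_t = {m ∈ [0,1] : W̃_t(m) < 1/δ}` form a `(1−δ)`-confidence sequence for `m*`:
`P(∃ t ∈ {1,…,N} : m* ∉ C_t) ≤ δ`. -/
theorem statement10
    [m0 : MeasurableSpace Ω] (μ : Measure Ω) [IsProbabilityMeasure μ]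
    {N : ℕ} (hN : 1 ≤ N)
    (π f : Fin N → ℝ)
    (hπ : ∀ i, π i ∈ Set.Ioc (0 : ℝ) 1) (hπsum : ∑ i, π i = 1)
    (hf : ∀ i, f i ∈ Set.Icc (0 : ℝ) 1)
    (I : ℕ → Ω → Fin N) (hI : ∀ t, Measurable (I t))
    (q : ℕ → Ω → Fin N → ℝ)
    (hq_meas : ∀ t, 1 ≤ t → t ≤ N → ∀ i,
      StronglyMeasurable[filt I (t - 1)] fun ω => q t ω i)
    (hq_pos : ∀ t ω, 1 ≤ t → t ≤ N → ∀ i ∈ remaining I t ω, 0 < q t ω i)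
    (hq_sum : ∀ t ω, 1 ≤ t → t ≤ N → ∑ i ∈ remaining I t ω, q t ω i = 1)
    (hWoR : ∀ t ω, 1 ≤ t → t ≤ N → I t ω ∈ remaining I t ω)
    (hcond : ∀ t, 1 ≤ t → t ≤ N → ∀ G : Ω → Fin N → ℝ,
      (∀ i, StronglyMeasurable[filt I (t - 1)] fun ω => G ω i) →
      μ[(fun ω => G ω (I t ω)) | filt I (t - 1)]
        =ᵐ[μ] fun ω => ∑ i ∈ remaining I t ω, q t ω i * G ω i)
    (mstar : ℝ) (hmstar : mstar = ∑ i, π i * f i)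
    (S : Fin N → ℝ) (hS : ∀ i, S i ∈ Set.Icc (0 : ℝ) 1)
    (β : ℕ → Ω → ℝ)
    (hβ_meas : ∀ t, 1 ≤ t → t ≤ N → StronglyMeasurable[filt I (t - 1)] (β t))
    (hβ_bdd : ∀ t ω, β t ω ∈ Set.Icc (-1 : ℝ) 1)
    (lam : ℝ → ℕ → Ω → ℝ)
    (hlam_meas : ∀ m ∈ Set.Icc (0 : ℝ) 1, ∀ t, 1 ≤ t → t ≤ N →
      StronglyMeasurable[filt I (t - 1)] (lam m t))
    (hfac : ∀ m ∈ Set.Icc (0 : ℝ) 1, ∀ t, 1 ≤ t → t ≤ N → ∀ᵐ ω ∂μ,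
      0 ≤ 1 + lam m t ω * (Zt π f q I t ω + β t ω * Ut S q I t ω - muT π f I m t ω))
    (δ : ℝ) (hδ : δ ∈ Set.Ioo (0 : ℝ) 1) :
    μ {ω | ∃ t, 1 ≤ t ∧ t ≤ N ∧
        mstar ∉ {m : ℝ | m ∈ Set.Icc (0 : ℝ) 1 ∧ wealthCV π f S q I (lam m) β m t ω < 1 / δ}}
      ≤ ENNReal.ofReal δ := by
  classical
  obtain ⟨hδ0, hδ1⟩ := hδ
  have hm01 : mstar ∈ Set.Icc (0 : ℝ) 1 := by
    constructor
    · rw [hmstar]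
      exact Finset.sum_nonneg fun i _ => mul_nonneg (hπ i).1.le (hf i).1
    · rw [hmstar, ← hπsum]
      refine Finset.sum_le_sum fun i _ => ?_
      nlinarith [(hπ i).1, (hf i).2, (hf i).1]
  set W : ℕ → Ω → ℝ := fun t => wealthCV π f S q I (lam mstar) β mstar t with hW
  set L : ℕ → Ω → ℝ := fun t ω =>
    if ∀ r ∈ Finset.Icc 1 (t - 1), W r ω < 1 / δ then lam mstar t ω else 0 with hLdef
  set V : ℕ → Ω → ℝ := fun t => wealthCV π f S q I L β mstar t with hV
  have hq' : ∀ s, 1 ≤ s → s ≤ N → ∀ i, Measurable[filt I (s - 1)] fun ω => q s ω i :=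
    fun s h1 h2 i => (hq_meas s h1 h2 i).measurable
  have hβ' : ∀ s, 1 ≤ s → s ≤ N → Measurable[filt I (s - 1)] (β s) :=
    fun s h1 h2 => (hβ_meas s h1 h2).measurable
  have hlam' : ∀ s, 1 ≤ s → s ≤ N → Measurable[filt I (s - 1)] (lam mstar s) :=
    fun s h1 h2 => (hlam_meas mstar hm01 s h1 h2).measurable
  have hWmeas : ∀ r, r ≤ N → Measurable[filt I r] (W r) :=
    fun r hr => measurable_wealth π f S q I β (lam mstar) hq' hβ' hlam' mstar hr
  have hLmeas : ∀ s, 1 ≤ s → s ≤ N → Measurable[filt I (s - 1)] (L s) := by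
    intro s h1 h2
    refine Measurable.ite ?_ (hlam' s h1 h2) measurable_const
    have h : {ω | ∀ r ∈ Finset.Icc 1 (s - 1), W r ω < 1 / δ}
        = ⋂ r ∈ (Finset.Icc 1 (s - 1) : Finset ℕ), {ω | W r ω < 1 / δ} := by
      ext ω; simp
    rw [h]
    refine MeasurableSet.biInter (Finset.countable_toSet _) fun r hr => ?_
    obtain ⟨hr1, hr2⟩ := Finset.mem_Icc.mp hr
    have : Measurable[filt I (s - 1)] (W r) :=
      (hWmeas r (hr2.trans ((Nat.sub_le s 1).trans h2))).mono (filt_mono I hr2) le_rfl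
    exact measurableSet_lt this measurable_const
  have hVmeas : ∀ t, t ≤ N → Measurable[filt I t] (V t) :=
    fun t ht => measurable_wealth π f S q I β L hq' hβ' hLmeas mstar ht
  -- nonnegativity
  have hnonneg : ∀ᵐ ω ∂μ, ∀ s ∈ Finset.Icc 1 N,
      0 ≤ 1 + lam mstar s ω * (Zt π f q I s ω + β s ω * Ut S q I s ω
        - muT π f I mstar s ω) := by
    rw [Filter.eventually_all_finset]
    intro s hs
    obtain ⟨h1, h2⟩ := Finset.mem_Icc.mp hs
    exact hfac mstar hm01 s h1 h2
  have hVnonneg : ∀ t, t ≤ N → 0 ≤ᵐ[μ] V t := by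
    intro t ht
    filter_upwards [hnonneg] with ω hω
    have : V t ω = ∏ s ∈ Finset.Icc 1 t,
        (1 + L s ω * (Zt π f q I s ω + β s ω * Ut S q I s ω - muT π f I mstar s ω)) := rfl
    rw [this]
    refine Finset.prod_nonneg fun s hs => ?_
    obtain ⟨h1, h2⟩ := Finset.mem_Icc.mp hs
    by_cases hcondif : ∀ r ∈ Finset.Icc 1 (s - 1), W r ω < 1 / δ
    · have hL : L s ω = lam mstar s ω := if_pos hcondif
      rw [hL]
      exact hω s (Finset.mem_Icc.mpr ⟨h1, h2.trans ht⟩)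
    · have hL : L s ω = 0 := if_neg hcondif
      rw [hL]
      simp
  -- martingale induction
  have hmle : ∀ t, filt I t ≤ m0 := filt_le I hI
  have key : ∀ t, t ≤ N → Integrable (V t) μ ∧ ∫ ω, V t ω ∂μ = 1 := by
    intro t
    induction t with
    | zero =>
      intro _
      have h0 : V 0 = fun _ => (1 : ℝ) := by
        funext ω; simp [hV, wealthCV]
      rw [h0]
      exact ⟨integrable_const 1, by simp⟩
    | succ t ih =>
      intro ht1
      have htN : t ≤ N := (Nat.lt_of_succ_le ht1).le
      obtain ⟨ihInt, ihInteg⟩ := ih htN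
      have h1 : 1 ≤ t + 1 := Nat.succ_le_succ (Nat.zero_le t)
      set c : Ω → ℝ := fun ω =>
        -(β (t + 1) ω * ∑ i ∈ remaining I (t + 1) ω, q (t + 1) ω i * S i)
          - muT π f I mstar (t + 1) ω with hc
      set G : Ω → Fin N → ℝ := fun ω i => V t ω *
        (1 + L (t + 1) ω * ((f i * (π i / q (t + 1) ω i) + β (t + 1) ω * S i) + c ω))
        with hG
      have hcmeas : Measurable[filt I t] c := by
        have hs : Measurable[filt I ((t + 1) - 1)]
            fun ω => ∑ i ∈ remaining I (t + 1) ω, q (t + 1) ω i * S i :=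
          measurable_sum_remaining I (t + 1) (g := fun ω i => q (t + 1) ω i * S i)
            fun i => (hq' (t + 1) h1 ht1 i).mul measurable_const
        have h : Measurable[filt I ((t + 1) - 1)] c :=
          ((hβ' (t + 1) h1 ht1).mul hs).neg.sub (measurable_muT π f I mstar (t + 1))
        simpa [Nat.add_sub_cancel] using h
      have hGmeas : ∀ i, StronglyMeasurable[filt I ((t + 1) - 1)] fun ω => G ω i := by
        intro i
        have hq1 : Measurable[filt I t] fun ω => q (t + 1) ω i := by
          have := hq' (t + 1) h1 ht1 i
          simpa [Nat.add_sub_cancel] using this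
        have hβ1 : Measurable[filt I t] (β (t + 1)) := by
          have := hβ' (t + 1) h1 ht1
          simpa [Nat.add_sub_cancel] using this
        have hL1 : Measurable[filt I t] (L (t + 1)) := by
          have := hLmeas (t + 1) h1 ht1
          simpa [Nat.add_sub_cancel] using this
        have hM : Measurable[filt I t] fun ω => G ω i := by
          refine (hVmeas t htN).mul (measurable_const.add (hL1.mul ?_))
          exact ((measurable_const.mul (measurable_const.div hq1)).add
            (hβ1.mul measurable_const)).add hcmeas
        have hM' : Measurable[filt I ((t + 1) - 1)] fun ω => G ω i := by
          simpa [Nat.add_sub_cancel] using hM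
        exact hM'.stronglyMeasurable
      have hGI : (fun ω => G ω (I (t + 1) ω)) = V (t + 1) := by
        funext ω
        have hsucc := wealthCV_succ π f S q I L β mstar t ω
        have hVs : V (t + 1) ω = V t ω * (1 + L (t + 1) ω * (Zt π f q I (t + 1) ω
            + β (t + 1) ω * Ut S q I (t + 1) ω - muT π f I mstar (t + 1) ω)) := hsucc
        rw [hVs]
        simp only [hG, hc, Zt, Ut]
        ring
      have hsum : (fun ω => ∑ i ∈ remaining I (t + 1) ω, q (t + 1) ω i * G ω i) = V t := by
        funext ω
        have hterm : ∀ i ∈ remaining I (t + 1) ω, q (t + 1) ω i * G ω i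
            = V t ω * q (t + 1) ω i
              + V t ω * L (t + 1) ω * (π i * f i)
              + V t ω * L (t + 1) ω * β (t + 1) ω * (q (t + 1) ω i * S i)
              + V t ω * L (t + 1) ω * c ω * q (t + 1) ω i := by
          intro i hi
          have hqi : q (t + 1) ω i ≠ 0 := (hq_pos (t + 1) ω h1 ht1 i hi).ne'
          simp only [hG]
          field_simp
          ring
        rw [Finset.sum_congr rfl hterm]
        rw [Finset.sum_add_distrib, Finset.sum_add_distrib, Finset.sum_add_distrib,
          ← Finset.mul_sum, ← Finset.mul_sum, ← Finset.mul_sum, ← Finset.mul_sum,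
          hq_sum (t + 1) ω h1 ht1, sum_remaining_pif π f I hWoR ht1 ω, ← hmstar]
        simp only [hc, muT]
        ring
      have hce := hcond (t + 1) h1 ht1 G hGmeas
      rw [hGI, hsum] at hce
      simp only [Nat.add_sub_cancel] at hce
      by_cases hint : Integrable (V (t + 1)) μ
      · refine ⟨hint, ?_⟩
        calc ∫ ω, V (t + 1) ω ∂μ
            = ∫ ω, (μ[V (t + 1)|filt I t]) ω ∂μ := (integral_condExp (hmle t)).symm
          _ = ∫ ω, V t ω ∂μ := integral_congr_ae hce
          _ = 1 := ihInteg
      · exfalso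
        have h0 : μ[V (t + 1)|filt I t] = 0 := condExp_of_not_integrable hint
        rw [h0] at hce
        have h0' : ∫ ω, V t ω ∂μ = 0 := by
          rw [integral_congr_ae hce.symm]
          simp
        rw [ihInteg] at h0'
        exact one_ne_zero h0'
  -- stopping argument
  have hstop : {ω | ∃ t, 1 ≤ t ∧ t ≤ N ∧
      mstar ∉ {m : ℝ | m ∈ Set.Icc (0 : ℝ) 1 ∧
        wealthCV π f S q I (lam m) β m t ω < 1 / δ}}
      ⊆ {ω | 1 / δ ≤ V N ω} := by
    intro ω hω
    obtain ⟨t, ht1, htN, hnot⟩ := hω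
    have hWt : 1 / δ ≤ W t ω := by
      by_contra hlt
      push_neg at hlt
      exact hnot ⟨hm01, hlt⟩
    have hex : ∃ s, 1 ≤ s ∧ s ≤ N ∧ 1 / δ ≤ W s ω := ⟨t, ht1, htN, hWt⟩
    obtain ⟨hT1, hTN, hTW⟩ := Nat.find_spec hex
    set T := Nat.find hex with hTdef
    have hmin : ∀ r, 1 ≤ r → r < T → W r ω < 1 / δ := by
      intro r hr1 hrT
      have h := Nat.find_min hex hrT
      push_neg at h
      exact h hr1 (le_of_lt (lt_of_lt_of_le hrT hTN))
    have heq : ∀ s, s ≤ T → V s ω = W s ω := by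
      intro s
      induction s with
      | zero => intro _; simp [hV, hW, wealthCV]
      | succ n ih =>
        intro hs
        have hn : n ≤ T := (Nat.le_succ n).trans hs
        have hVs : V (n + 1) ω = V n ω * (1 + L (n + 1) ω * (Zt π f q I (n + 1) ω
            + β (n + 1) ω * Ut S q I (n + 1) ω - muT π f I mstar (n + 1) ω)) :=
          wealthCV_succ π f S q I L β mstar n ω
        have hWs : W (n + 1) ω = W n ω * (1 + lam mstar (n + 1) ω * (Zt π f q I (n + 1) ω
            + β (n + 1) ω * Ut S q I (n + 1) ω - muT π f I mstar (n + 1) ω)) :=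
          wealthCV_succ π f S q I (lam mstar) β mstar n ω
        have hif : ∀ r ∈ Finset.Icc 1 (n + 1 - 1), W r ω < 1 / δ := by
          intro r hr
          obtain ⟨hr1, hr2⟩ := Finset.mem_Icc.mp hr
          exact hmin r hr1 (by omega)
        have hL : L (n + 1) ω = lam mstar (n + 1) ω := if_pos hif
        rw [hVs, hWs, ih hn, hL]
    have hconst : ∀ s, T ≤ s → V s ω = V T ω := by
      intro s
      induction s with
      | zero => intro h; rw [Nat.le_zero.mp h]
      | succ n ih =>
        intro h
        rcases Nat.lt_or_ge n T with h' | h'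
        · have : T = n + 1 := le_antisymm h (Nat.succ_le_of_lt h')
          rw [this]
        · have hVs : V (n + 1) ω = V n ω * (1 + L (n + 1) ω * (Zt π f q I (n + 1) ω
              + β (n + 1) ω * Ut S q I (n + 1) ω - muT π f I mstar (n + 1) ω)) :=
            wealthCV_succ π f S q I L β mstar n ω
          have hL0 : L (n + 1) ω = 0 := by
            refine if_neg ?_
            push_neg
            exact ⟨T, Finset.mem_Icc.mpr ⟨hT1, by omega⟩, hTW⟩
          rw [hVs, hL0]
          simpa using ih h'
    have hVN : V N ω = W T ω := by
      rw [hconst N hTN, heq T le_rfl]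
    show 1 / δ ≤ V N ω
    rw [hVN]
    exact hTW
  -- Markov
  obtain ⟨hIntN, hIntegN⟩ := key N le_rfl
  have hmark := mul_meas_ge_le_integral_of_nonneg (hVnonneg N le_rfl) hIntN (1 / δ)
  rw [hIntegN] at hmark
  have hfin : μ {x | 1 / δ ≤ V N x} ≠ ⊤ := measure_ne_top μ _
  have htoR : (μ {x | 1 / δ ≤ V N x}).toReal ≤ δ := by
    have hδpos : (0 : ℝ) < 1 / δ := by positivity
    calc (μ {x | 1 / δ ≤ V N x}).toReal
        = δ * (1 / δ * (μ {x | 1 / δ ≤ V N x}).toReal) := by field_simp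
      _ ≤ δ * 1 := mul_le_mul_of_nonneg_left hmark hδ0.le
      _ = δ := mul_one δ
  calc μ {ω | ∃ t, 1 ≤ t ∧ t ≤ N ∧
      mstar ∉ {m : ℝ | m ∈ Set.Icc (0 : ℝ) 1 ∧
        wealthCV π f S q I (lam m) β m t ω < 1 / δ}}
      ≤ μ {x | 1 / δ ≤ V N x} := measure_mono hstop
    _ ≤ ENNReal.ofReal δ := by
        rw [← ENNReal.ofReal_toReal hfin]
        exact ENNReal.ofReal_le_ofReal htoR


end RLFA
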